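/- If A and B are distinct bases of a matroid, a ∈ ℝ^n is a linear functional with a·1_A = a·1_B maximal among all bases, and |A Δ B| > 2, then there exists a basis C distinct from both A and B with a·1_C ≥ a·1_A. -/

import Mathlib

open Matrix
open scoped Classical

noncomputable def indVec {n : ℕ} (A : Set (Fin n)) : Fin n → ℝ := A.indicator 1

lemma dot_indVec_single {n : ℕ} (a : Fin n → ℝ) (x : Fin n) :
    a ⬝ᵥ indVec {x} = a x := by
  simp [dotProduct, indVec, Set.indicator_apply, mul_comm]

lemma dot_indVec_exchange {n : ℕ} (a : Fin n → ℝ) (S : Set (Fin n)) {x y : Fin n}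
    (hx : x ∈ S) (hy : y ∉ S) :
    a ⬝ᵥ indVec (insert y (S \ {x})) = a ⬝ᵥ indVec S - a x + a y := by
  have hxy : x ≠ y := fun h => hy (h ▸ hx)
  have hfun : indVec (insert y (S \ {x})) = indVec S - indVec {x} + indVec {y} := by
    funext i
    simp only [indVec, Pi.add_apply, Pi.sub_apply, Set.indicator_apply, Pi.one_apply,
      Set.mem_insert_iff, Set.mem_diff, Set.mem_singleton_iff]
    split_ifs <;> simp_all
  rw [hfun, dotProduct_add, dotProduct_sub, dot_indVec_single, dot_indVec_single]

theorem exists_third_basis_on_face {n : ℕ} (M : Matroid (Fin n)) (A B : Set (Fin n))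
    (hA : M.IsBase A) (hB : M.IsBase B) (hAB : A ≠ B) (a : Fin n → ℝ)
    (heq : a ⬝ᵥ indVec A = a ⬝ᵥ indVec B)
    (hmax : ∀ C, M.IsBase C → a ⬝ᵥ indVec C ≤ a ⬝ᵥ indVec A)
    (hcard : 2 < (symmDiff A B).ncard) :
    ∃ C, M.IsBase C ∧ C ≠ A ∧ C ≠ B ∧ a ⬝ᵥ indVec A ≤ a ⬝ᵥ indVec C := by
  classical
  -- A \ B and B \ A are nonempty
  have hABne : (A \ B).Nonempty := by
    rw [Set.nonempty_iff_ne_empty]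
    intro h
    exact hAB (hA.eq_of_subset_isBase hB (Set.diff_eq_empty.mp h))
  have hBAne : (B \ A).Nonempty := by
    rw [Set.nonempty_iff_ne_empty]
    intro h
    exact hAB ((hB.eq_of_subset_isBase hA (Set.diff_eq_empty.mp h)).symm)
  obtain ⟨x, hxAB, hxmin⟩ := Set.exists_min_image (A \ B) a (Set.toFinite _) hABne
  obtain ⟨y, hyBA, hC⟩ := hA.exchange hB hxAB
  obtain ⟨x', hx'BA, hx'min⟩ := Set.exists_min_image (B \ A) a (Set.toFinite _) hBAne
  obtain ⟨y', hy'AB, hC'⟩ := hB.exchange hA hx'BA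
  have hCval : a ⬝ᵥ indVec (insert y (A \ {x})) = a ⬝ᵥ indVec A - a x + a y :=
    dot_indVec_exchange a A hxAB.1 hyBA.2
  have hC'val : a ⬝ᵥ indVec (insert y' (B \ {x'})) = a ⬝ᵥ indVec B - a x' + a y' :=
    dot_indVec_exchange a B hx'BA.1 hy'AB.2
  have h1 : a y ≤ a x := by
    have := hmax _ hC
    rw [hCval] at this; linarith
  have h2 : a y' ≤ a x' := by
    have := hmax _ hC'
    rw [hC'val, ← heq] at this; linarith
  have h3 : a x ≤ a y' := hxmin y' hy'AB
  have h4 : a x' ≤ a y := hx'min y hyBA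
  have heqxy : a y = a x := le_antisymm h1 (by linarith)
  refine ⟨insert y (A \ {x}), hC, ?_, ?_, by rw [hCval, heqxy]; linarith⟩
  · intro h
    exact hyBA.2 (h ▸ (Set.mem_insert y _))
  · intro h
    have hsub : symmDiff A B ⊆ {x, y} := by
      intro z hz
      rw [Set.mem_symmDiff] at hz
      subst h
      rcases hz with ⟨hzA, hzB⟩ | ⟨hzB, hzA⟩
      · simp only [Set.mem_insert_iff, Set.mem_diff, Set.mem_singleton_iff, not_or,
          not_and, not_not] at hzB
        left
        exact hzB.2 hzA
      · simp only [Set.mem_insert_iff, Set.mem_diff, Set.mem_singleton_iff] at hzB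
        rcases hzB with h' | h'
        · right; exact h'
        · exact absurd h'.1 hzA
    have := Set.ncard_le_ncard hsub (Set.toFinite _)
    have h2' : ({x, y} : Set (Fin n)).ncard ≤ 2 := Set.ncard_insert_le x {y} |>.trans (by simp)
    omega
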